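/- Let z : [0,δ) → ℝ be twice continuously differentiable with z'(0) = 0, and suppose that for all r ∈ (0,δ), z''(r) = [r(1+z'(r)²)² / (r√(1+z'(r)²) − 2τ z'(r))] · (c(r) − z'(r)/(r√(1+z'(r)²))), where c : [0,δ) → ℝ is continuous and τ > 0. Then z''(0) satisfies the quadratic equation 2τ (z''(0))² − 2 z''(0) + c(0) = 0. -/

import Mathlib

open Set Real Filter Topology

/-- If `z` is twice continuously differentiable on `[0,δ)` with `z'(0) = 0` and
satisfies the disconnected-interface ODE
`z'' = [r(1+z'²)²/(r√(1+z'²) − 2τ z')]·(c(r) − z'/(r√(1+z'²)))` on `(0,δ)`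
with `c` continuous and `τ > 0`, then `z''(0)` satisfies
`2τ (z''(0))² − 2 z''(0) + c(0) = 0`. -/
theorem stmt_4 (τ δ : ℝ) (hτ : 0 < τ) (hδ : 0 < δ)
    (z z' z'' c : ℝ → ℝ)
    (hz' : ∀ r ∈ Ico (0 : ℝ) δ, HasDerivWithinAt z (z' r) (Ico 0 δ) r)
    (hz'' : ∀ r ∈ Ico (0 : ℝ) δ, HasDerivWithinAt z' (z'' r) (Ico 0 δ) r)
    (hz''cont : ContinuousOn z'' (Ico 0 δ))
    (hccont : ContinuousOn c (Ico 0 δ))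
    (hz'0 : z' 0 = 0)
    (hODE : ∀ r ∈ Ioo (0 : ℝ) δ,
      z'' r = (r * (1 + (z' r) ^ 2) ^ 2 /
          (r * Real.sqrt (1 + (z' r) ^ 2) - 2 * τ * z' r)) *
        (c r - z' r / (r * Real.sqrt (1 + (z' r) ^ 2)))) :
    2 * τ * (z'' 0) ^ 2 - 2 * z'' 0 + c 0 = 0 := by
  set a := z'' 0 with ha
  set l : Filter ℝ := 𝓝[>] (0:ℝ) with hldef
  have h0mem : (0:ℝ) ∈ Ico (0:ℝ) δ := ⟨le_refl _, hδ⟩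
  have hl : l = 𝓝[Ioo (0:ℝ) δ] 0 := (nhdsWithin_Ioo_eq_nhdsGT hδ).symm
  have hlle : l ≤ 𝓝[Ico (0:ℝ) δ] 0 := by
    rw [hl]; exact nhdsWithin_mono _ Ioo_subset_Ico_self
  have hmem : ∀ᶠ r in l, r ∈ Ioo (0:ℝ) δ := by
    rw [hl]; exact eventually_mem_nhdsWithin
  -- z'' tends to a
  have hz''lim : Tendsto z'' l (𝓝 a) := (hz''cont 0 h0mem).mono_left hlle
  have hclim : Tendsto c l (𝓝 (c 0)) := (hccont 0 h0mem).mono_left hlle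
  -- slope
  have hu : Tendsto (fun r => z' r / r) l (𝓝 a) := by
    have h := (hasDerivWithinAt_iff_tendsto_slope).mp (hz'' 0 h0mem)
    have hle2 : l ≤ 𝓝[Ico (0:ℝ) δ \ {0}] 0 := by
      rw [hl]; refine nhdsWithin_mono _ ?_
      intro x hx; exact ⟨⟨le_of_lt hx.1, hx.2⟩, ne_of_gt hx.1⟩
    have h2 := h.mono_left hle2
    refine h2.congr' ?_
    filter_upwards [hmem] with r hr
    simp [slope_def_field, hz'0]
  have hz'lim : Tendsto z' l (𝓝 0) := by
    have := hu.mul (tendsto_nhdsWithin_of_tendsto_nhds (tendsto_id))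
    rw [mul_zero] at this
    refine (this.congr' ?_)
    filter_upwards [hmem] with r hr
    exact div_mul_cancel₀ _ (ne_of_gt hr.1)
  have hs : Tendsto (fun r => Real.sqrt (1 + z' r ^ 2)) l (𝓝 1) := by
    have h1 : Tendsto (fun r => 1 + z' r ^ 2) l (𝓝 (1 + 0^2)) :=
      tendsto_const_nhds.add (hz'lim.pow 2)
    have := (Real.continuous_sqrt.continuousAt (x := (1:ℝ))).tendsto.comp
      (by simpa using h1)
    simpa [Function.comp_def] using this
  have hg : Tendsto (fun r => Real.sqrt (1 + z' r ^ 2) - 2 * τ * (z' r / r)) l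
      (𝓝 (1 - 2 * τ * a)) :=
    hs.sub ((tendsto_const_nhds.mul hu))
  -- denominator eventually nonzero
  have hD : ∀ᶠ r in l, r * Real.sqrt (1 + (z' r) ^ 2) - 2 * τ * z' r ≠ 0 := by
    by_contra hcon
    rw [not_eventually] at hcon
    have hF : (l ⊓ 𝓟 {r | r * Real.sqrt (1 + (z' r) ^ 2) - 2 * τ * z' r = 0}).NeBot := by
      rw [← frequently_iff_neBot]
      simpa using hcon
    set F := l ⊓ 𝓟 {r | r * Real.sqrt (1 + (z' r) ^ 2) - 2 * τ * z' r = 0} with hFdef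
    have hFl : F ≤ l := inf_le_left
    have hFD : ∀ᶠ r in F, r * Real.sqrt (1 + (z' r) ^ 2) - 2 * τ * z' r = 0 := by
      rw [hFdef, eventually_inf_principal]; exact Eventually.of_forall fun r h => h
    -- z'' = 0 on F
    have hz''0 : ∀ᶠ r in F, z'' r = 0 := by
      filter_upwards [hFD, hFl hmem] with r hr hr'
      rw [hODE r hr', hr, div_zero, zero_mul]
    have ha0 : a = 0 :=
      tendsto_nhds_unique (hz''lim.mono_left hFl)
        ((tendsto_congr' hz''0).mpr tendsto_const_nhds)
    -- g = 0 on F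
    have hg0 : ∀ᶠ r in F, Real.sqrt (1 + z' r ^ 2) - 2 * τ * (z' r / r) = 0 := by
      filter_upwards [hFD, hFl hmem] with r hr hr'
      have hrne : r ≠ 0 := ne_of_gt hr'.1
      field_simp at hr ⊢
      linarith
    have h10 : (1 : ℝ) - 2 * τ * a = 0 :=
      tendsto_nhds_unique (hg.mono_left hFl)
        ((tendsto_congr' hg0).mpr tendsto_const_nhds)
    rw [ha0] at h10; norm_num at h10
  -- main identity eventually
  have hid : ∀ᶠ r in l,
      z'' r * (Real.sqrt (1 + z' r ^ 2) - 2 * τ * (z' r / r))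
        = (1 + z' r ^ 2) ^ 2 * (c r - (z' r / r) / Real.sqrt (1 + z' r ^ 2)) := by
    filter_upwards [hmem, hD] with r hr hDr
    have hrne : r ≠ 0 := ne_of_gt hr.1
    have hsne : Real.sqrt (1 + z' r ^ 2) ≠ 0 := by
      positivity
    rw [hODE r hr]
    have hD' : r * Real.sqrt (1 + z' r ^ 2) - 2 * τ * (z' r / r) * r ≠ 0 := by
      rwa [mul_assoc, div_mul_cancel₀ _ hrne]
    have heq : Real.sqrt (1 + z' r ^ 2) - 2 * τ * (z' r / r)
        = (r * Real.sqrt (1 + z' r ^ 2) - 2 * τ * z' r) / r := by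
      field_simp
    rw [heq, div_div]
    generalize (r * Real.sqrt (1 + z' r ^ 2) - 2 * τ * z' r) = D at hDr ⊢
    generalize (1 + z' r ^ 2) ^ 2 = X
    generalize (c r - z' r / (r * Real.sqrt (1 + z' r ^ 2))) = Y
    have hDr' : D / r * r = D := div_mul_cancel₀ _ hrne
    calc r * X / D * Y * (D / r) = X * ((D / r * r) * (Y / D)) := by ring
      _ = X * Y := by rw [hDr', ← mul_div_assoc, mul_div_cancel_left₀ _ hDr]
  -- take limits
  have hlhs : Tendsto (fun r => z'' r * (Real.sqrt (1 + z' r ^ 2) - 2 * τ * (z' r / r)))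
      l (𝓝 (a * (1 - 2 * τ * a))) := hz''lim.mul hg
  have hrhs : Tendsto (fun r => (1 + z' r ^ 2) ^ 2 * (c r - (z' r / r) / Real.sqrt (1 + z' r ^ 2)))
      l (𝓝 ((1 + (0:ℝ) ^ 2) ^ 2 * (c 0 - a / 1))) := by
    exact ((tendsto_const_nhds.add (hz'lim.pow 2)).pow 2).mul (hclim.sub (hu.div hs one_ne_zero))
  have key : a * (1 - 2 * τ * a) = (1 + (0:ℝ) ^ 2) ^ 2 * (c 0 - a / 1) :=
    tendsto_nhds_unique hlhs ((tendsto_congr' hid).mpr hrhs)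
  simp at key
  nlinarith [key]
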